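/- arXiv:1210.7884 — 2 statements merged into one kernel-verified Lean document; each statement's English description precedes it below -/
import Mathlib

section
/- Let K be a number field and T a finite set of places of K containing all archimedean places. Let U_{K,T} = {α ∈ K^× : ‖α‖_v = 1 for every place v of K with v ∉ T} be the group of T-units, and consider the logarithmic embedding l : U_{K,T} → ℝ^T given by l(α) = (([K_v:ℚ_v]/[K:ℚ]) · log ‖α‖_v)_{v ∈ T}. Then the ℚ-linear span of the image l(U_{K,T}) is dense in the hyperplane H = {x ∈ ℝ^T : Σ_{v ∈ T} x_v = 0} (with respect to any norm on the finite-dimensional space ℝ^T). -/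
open NumberField IsDedekindDomain Ideal
open scoped Classical

variable (K : Type*) [Field K] [NumberField K]

/-- The valuation `ord_v : K → ℤ` attached to a finite place (height-one prime) `v`,
with the convention `ord_v 0 = 0`. -/
noncomputable def ordAt (v : HeightOneSpectrum (𝓞 K)) (α : K) : ℤ :=
  if h : v.valuation K α = 0 then 0
  else - Multiplicative.toAdd (WithZero.unzero h)

/-- The residue characteristic of a finite place. -/
noncomputable def resChar (v : HeightOneSpectrum (𝓞 K)) : ℕ :=
  ringChar (𝓞 K ⧸ v.asIdeal)

/-- The ramification index `e_v` of a finite place over its residue characteristic. -/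
noncomputable def ramIdx (v : HeightOneSpectrum (𝓞 K)) : ℕ :=
  Ideal.ramificationIdx' (Ideal.span {(resChar K v : ℤ)}) v.asIdeal

/-- The local degree `[K_v : ℚ_p] = e_v ⬝ f_v` of a finite place `v` over the rational
prime `p` below it. -/
noncomputable def localDeg (v : HeightOneSpectrum (𝓞 K)) : ℕ :=
  ramIdx K v * Ideal.inertiaDeg' (Ideal.span {(resChar K v : ℤ)}) v.asIdeal

/-- The absolute value `‖·‖_v` at a finite place `v`, normalized so that it extends the usual
`p`-adic absolute value on `ℚ`: `‖α‖_v = p ^ (-ord_v(α) / e_v)`. -/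
noncomputable def finAbs (v : HeightOneSpectrum (𝓞 K)) (α : K) : ℝ :=
  if α = 0 then 0 else (resChar K v : ℝ) ^ (-(ordAt K v α : ℝ) / (ramIdx K v : ℝ))

/-- A place of the number field `K`: either an archimedean (infinite) place or a
nonarchimedean (finite) place, i.e. a height-one prime of the ring of integers. -/
abbrev Place := InfinitePlace K ⊕ HeightOneSpectrum (𝓞 K)

/-- The absolute value `‖·‖_v` attached to a place `v` of `K`, normalized so that it extends
the usual absolute value `|·|_p` on `ℚ` (for `p` a rational prime or `∞`). -/
noncomputable def placeAbs (v : Place K) (α : K) : ℝ :=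
  match v with
  | .inl w => w α
  | .inr v => finAbs K v α

/-- The local degree `[K_v : ℚ_v]` of a place of `K`. -/
noncomputable def placeLocalDeg (v : Place K) : ℕ :=
  match v with
  | .inl w => w.mult
  | .inr v => localDeg K v
namespace SUnitDensity

set_option maxHeartbeats 1000000
set_option synthInstance.maxHeartbeats 200000
set_option linter.unusedSectionVars false

variable (v : HeightOneSpectrum (𝓞 K))

noncomputable instance : Fintype (𝓞 K ⧸ v.asIdeal) :=
  haveI := Ideal.finiteQuotientOfFreeOfNeBot _ v.ne_bot; Fintype.ofFinite _

instance : v.asIdeal.IsMaximal := Ideal.IsPrime.isMaximal v.isPrime v.ne_bot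

lemma resChar_prime : (resChar K v).Prime := by
  letI := Ideal.Quotient.field v.asIdeal
  haveI : CharP (𝓞 K ⧸ v.asIdeal) (resChar K v) := ringChar.charP _
  exact CharP.char_is_prime (𝓞 K ⧸ v.asIdeal) (resChar K v)

lemma one_lt_resChar : 1 < resChar K v := (resChar_prime K v).one_lt

lemma one_lt_absNorm : 1 < Ideal.absNorm v.asIdeal := by
  rw [Ideal.absNorm_apply, Submodule.cardQuot_apply, Nat.card_eq_fintype_card]
  exact Fintype.one_lt_card

lemma comap_algebraMap_eq :
    Ideal.comap (algebraMap ℤ (𝓞 K)) v.asIdeal = Ideal.span {(resChar K v : ℤ)} := by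
  haveI : CharP (𝓞 K ⧸ v.asIdeal) (resChar K v) := ringChar.charP _
  ext a
  rw [Ideal.mem_comap, Ideal.mem_span_singleton, ← Ideal.Quotient.eq_zero_iff_mem]
  have h : (Ideal.Quotient.mk v.asIdeal) (algebraMap ℤ (𝓞 K) a)
      = ((a : ℤ) : 𝓞 K ⧸ v.asIdeal) := by
    rw [algebraMap_int_eq, eq_intCast, map_intCast]
  rw [h, CharP.intCast_eq_zero_iff (𝓞 K ⧸ v.asIdeal) (resChar K v) a, Int.natCast_dvd]

lemma spanP_isMaximal : (Ideal.span {(resChar K v : ℤ)}).IsMaximal :=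
  PrincipalIdealRing.isMaximal_of_irreducible
    (Int.prime_iff_natAbs_prime.mpr (by simpa using resChar_prime K v)).irreducible

lemma ramIdx_ne_zero : ramIdx K v ≠ 0 := by
  refine (fun hle h0 => Ideal.IsDedekindDomain.ramificationIdx'_ne_zero h0 v.isPrime hle) ?_ ?_
  · rw [Ideal.map_le_iff_le_comap, comap_algebraMap_eq]
  · rw [Ideal.map_span, Set.image_singleton, Ne, Ideal.span_singleton_eq_bot]
    simpa using (resChar_prime K v).ne_zero

lemma absNorm_eq_pow : Ideal.absNorm v.asIdeal = resChar K v ^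
    (Ideal.inertiaDeg' (Ideal.span {(resChar K v : ℤ)}) v.asIdeal) := by
  haveI : (Ideal.span {(resChar K v : ℤ)}).IsMaximal := spanP_isMaximal K v
  haveI : v.asIdeal.LiesOver (Ideal.span {(resChar K v : ℤ)}) :=
    ⟨(comap_algebraMap_eq K v).symm⟩
  rw [Ideal.inertiaDeg'_algebraMap]
  letI : Field (ℤ ⧸ Ideal.span {(resChar K v : ℤ)}) := Ideal.Quotient.field _
  haveI : NeZero (resChar K v) := ⟨(resChar_prime K v).ne_zero⟩
  letI : Fintype (ℤ ⧸ Ideal.span {(resChar K v : ℤ)}) :=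
    Fintype.ofEquiv (ZMod (resChar K v))
      (Int.quotientSpanNatEquivZMod (resChar K v)).symm.toEquiv
  rw [Ideal.absNorm_apply, Submodule.cardQuot_apply, Nat.card_eq_fintype_card,
    Module.card_eq_pow_finrank (K := ℤ ⧸ Ideal.span {(resChar K v : ℤ)}) (V := 𝓞 K ⧸ v.asIdeal)]
  congr 1
  calc Fintype.card (ℤ ⧸ Ideal.span {(resChar K v : ℤ)})
      = Fintype.card (ZMod (resChar K v)) :=
        Fintype.card_congr (Int.quotientSpanNatEquivZMod (resChar K v)).toEquiv
    _ = resChar K v := ZMod.card _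

lemma inertiaDeg_ne_zero :
    Ideal.inertiaDeg' (Ideal.span {(resChar K v : ℤ)}) v.asIdeal ≠ 0 := by
  intro h
  have := absNorm_eq_pow K v
  rw [h, pow_zero] at this
  exact absurd this (one_lt_absNorm K v).ne'

end SUnitDensity
namespace SUnitDensity

set_option maxHeartbeats 1000000
set_option synthInstance.maxHeartbeats 200000
set_option linter.unusedSectionVars false

variable (v : HeightOneSpectrum (𝓞 K))

/-- exponent of `v` in the factorization of `I`. -/
noncomputable def cnt (I : Ideal (𝓞 K)) : ℕ :=
  (Associates.mk v.asIdeal).count (Associates.mk I).factors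

lemma ordAt_eq_of_valuation {α : K} {m : ℤ}
    (h : v.valuation K α = ((Multiplicative.ofAdd (-m) : Multiplicative ℤ) :
      WithZero (Multiplicative ℤ))) : ordAt K v α = m := by
  have h0 : v.valuation K α ≠ 0 := by rw [h]; exact WithZero.coe_ne_zero
  rw [ordAt, dif_neg h0]
  have hu : WithZero.unzero h0 = Multiplicative.ofAdd (-m) := by
    exact WithZero.coe_inj.mp ((WithZero.coe_unzero h0).trans h)
  rw [hu, toAdd_ofAdd, neg_neg]

lemma valuation_eq_ordAt {α : K} (hα : α ≠ 0) :
    v.valuation K α = ((Multiplicative.ofAdd (-(ordAt K v α)) : Multiplicative ℤ) :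
      WithZero (Multiplicative ℤ)) := by
  have h0 : v.valuation K α ≠ 0 := (Valuation.ne_zero_iff _).mpr hα
  rw [ordAt, dif_neg h0, neg_neg, ofAdd_toAdd, WithZero.coe_unzero]

lemma ordAt_algebraMap (β : 𝓞 K) (hβ : β ≠ 0) :
    ordAt K v (algebraMap (𝓞 K) K β) = cnt K v (Ideal.span {β}) := by
  apply ordAt_eq_of_valuation
  rw [v.valuation_of_algebraMap, v.intValuation_apply, v.intValuationDef_if_neg hβ]
  rfl

lemma ordAt_mul {α β : K} (hα : α ≠ 0) (hβ : β ≠ 0) :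
    ordAt K v (α * β) = ordAt K v α + ordAt K v β := by
  apply ordAt_eq_of_valuation
  rw [_root_.map_mul, valuation_eq_ordAt K v hα, valuation_eq_ordAt K v hβ, ← WithZero.coe_mul,
    ← ofAdd_add, neg_add]

lemma finAbs_eq_one {α : K} (hα : α ≠ 0) (h : ordAt K v α = 0) : finAbs K v α = 1 := by
  rw [finAbs, if_neg hα, h]
  norm_num

lemma ordAt_eq_zero_of_finAbs {α : K} (hα : α ≠ 0) (h : finAbs K v α = 1) :
    ordAt K v α = 0 := by
  rw [finAbs, if_neg hα] at h
  have hp : (1:ℝ) < resChar K v := by exact_mod_cast one_lt_resChar K v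
  have hlog := congrArg Real.log h
  rw [Real.log_rpow (lt_trans zero_lt_one hp), Real.log_one] at hlog
  have h2 : -(ordAt K v α : ℝ) / (ramIdx K v : ℝ) = 0 := by
    rcases mul_eq_zero.mp hlog with h' | h'
    · exact h'
    · exact absurd h' (Real.log_pos hp).ne'
  have he : ((ramIdx K v : ℝ)) ≠ 0 := Nat.cast_ne_zero.mpr (ramIdx_ne_zero K v)
  rw [div_eq_zero_iff] at h2
  rcases h2 with h2 | h2
  · exact_mod_cast neg_eq_zero.mp h2
  · exact absurd h2 he

lemma localDeg_mul_log_finAbs {α : K} (hα : α ≠ 0) :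
    (localDeg K v : ℝ) * Real.log (finAbs K v α)
      = -(ordAt K v α : ℝ) * Real.log (Ideal.absNorm v.asIdeal) := by
  have hp : (0:ℝ) < resChar K v := by
    exact_mod_cast lt_trans zero_lt_one (one_lt_resChar K v)
  have he : ((ramIdx K v : ℝ)) ≠ 0 := Nat.cast_ne_zero.mpr (ramIdx_ne_zero K v)
  rw [finAbs, if_neg hα, Real.log_rpow hp, absNorm_eq_pow, localDeg, Nat.cast_pow,
    Real.log_pow, Nat.cast_mul]
  field_simp

end SUnitDensity
namespace SUnitDensity

set_option maxHeartbeats 1000000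
set_option synthInstance.maxHeartbeats 200000
set_option linter.unusedSectionVars false

lemma span_prod (β : 𝓞 K) (hβ : β ≠ 0) (S : Finset (HeightOneSpectrum (𝓞 K)))
    (hS : ∀ v : HeightOneSpectrum (𝓞 K), v.asIdeal ∣ Ideal.span {β} → v ∈ S) :
    Ideal.span {β} = ∏ v ∈ S, v.asIdeal ^ cnt K v (Ideal.span {β}) := by
  have hI : Ideal.span {β} ≠ ⊥ := by simpa [Ideal.span_singleton_eq_bot] using hβ
  conv_lhs => rw [← Ideal.finprod_heightOneSpectrum_factorization hI]
  apply finprod_eq_prod_of_mulSupport_subset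
  intro v hv
  simp only [Function.mem_mulSupport] at hv
  by_contra hvS
  apply hv
  have hcnt : cnt K v (Ideal.span {β}) = 0 := by
    by_contra hne
    exact hvS (hS v ((Associates.count_ne_zero_iff_dvd hI v.irreducible).mp hne))
  rw [IsDedekindDomain.HeightOneSpectrum.maxPowDividing]
  rw [show (Associates.mk v.asIdeal).count (Associates.mk (Ideal.span {β})).factors
    = cnt K v (Ideal.span {β}) from rfl, hcnt, pow_zero]

lemma log_norm (β : 𝓞 K) (hβ : β ≠ 0) (S : Finset (HeightOneSpectrum (𝓞 K)))
    (hS : ∀ v : HeightOneSpectrum (𝓞 K), v.asIdeal ∣ Ideal.span {β} → v ∈ S) :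
    Real.log |((Algebra.norm ℚ (algebraMap (𝓞 K) K β) : ℚ) : ℝ)| =
      ∑ v ∈ S, (cnt K v (Ideal.span {β}) : ℝ) * Real.log (Ideal.absNorm v.asIdeal) := by
  have h1 : ((Ideal.absNorm (Ideal.span {β}) : ℕ) : ℝ)
      = |((Algebra.norm ℚ (algebraMap (𝓞 K) K β) : ℚ) : ℝ)| := by
    rw [Ideal.absNorm_span_singleton, ← NumberField.RingOfIntegers.coe_eq_algebraMap,
      ← Algebra.coe_norm_int β]
    simp [Nat.cast_natAbs]
  have h2 : ((Ideal.absNorm (Ideal.span {β}) : ℕ) : ℝ)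
      = ∏ v ∈ S, ((Ideal.absNorm v.asIdeal : ℕ) : ℝ) ^ cnt K v (Ideal.span {β}) := by
    conv_lhs => rw [span_prod K β hβ S hS]
    rw [map_prod]
    push_cast [map_pow]
    rfl
  rw [← h1, h2, Real.log_prod]
  · refine Finset.sum_congr rfl fun v _ => ?_
    rw [Real.log_pow]
  · intro v _
    refine pow_ne_zero _ ?_
    have := one_lt_absNorm K v
    positivity

lemma prod_formula (T : Finset (Place K)) (hT : ∀ w : InfinitePlace K, Sum.inl w ∈ T)
    {α : K} (hα : α ≠ 0)
    (h1 : ∀ vf : HeightOneSpectrum (𝓞 K), Sum.inr vf ∉ T → finAbs K vf α = 1) :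
    ∑ t ∈ T, (placeLocalDeg K t : ℝ) * Real.log (placeAbs K t α) = 0 := by
  classical
  obtain ⟨β, γ, hγ, hαeq⟩ := IsFractionRing.div_surjective (A := 𝓞 K) α
  have hγ0 : γ ≠ 0 := nonZeroDivisors.ne_zero hγ
  have hγK : algebraMap (𝓞 K) K γ ≠ 0 :=
    (map_ne_zero_iff _ (IsFractionRing.injective (𝓞 K) K)).mpr hγ0
  have hβK : algebraMap (𝓞 K) K β ≠ 0 := by
    intro h; apply hα; rw [← hαeq, h, zero_div]
  have hβ0 : β ≠ 0 := fun h => hβK (by rw [h, map_zero])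
  have hIβ : Ideal.span {β} ≠ (⊥ : Ideal (𝓞 K)) := by
    simpa [Ideal.span_singleton_eq_bot] using hβ0
  have hIγ : Ideal.span {γ} ≠ (⊥ : Ideal (𝓞 K)) := by
    simpa [Ideal.span_singleton_eq_bot] using hγ0
  -- the finite set of relevant places
  set Sβ := (Ideal.finite_factors hIβ).toFinset with hSβ
  set Sγ := (Ideal.finite_factors hIγ).toFinset with hSγ
  set S : Finset (HeightOneSpectrum (𝓞 K)) := T.toRight ∪ Sβ ∪ Sγ with hS
  -- ordAt of α
  have hord : ∀ v : HeightOneSpectrum (𝓞 K),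
      (ordAt K v α : ℝ) = (cnt K v (Ideal.span {β}) : ℝ) - (cnt K v (Ideal.span {γ}) : ℝ) := by
    intro v
    have hmul := ordAt_mul K v hα hγK
    have hrel : α * algebraMap (𝓞 K) K γ = algebraMap (𝓞 K) K β := by
      rw [← hαeq]; field_simp
    rw [hrel] at hmul
    rw [ordAt_algebraMap K v β hβ0, ordAt_algebraMap K v γ hγ0] at hmul
    have : (ordAt K v α : ℤ) = (cnt K v (Ideal.span {β}) : ℤ) - (cnt K v (Ideal.span {γ}) : ℤ) := by
      omega
    exact_mod_cast congrArg (Int.cast : ℤ → ℝ) this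
  -- norms
  have hNγ : (Algebra.norm ℚ) (algebraMap (𝓞 K) K γ) ≠ 0 := by
    rw [Algebra.norm_ne_zero_iff]; exact hγK
  have hNα : (Algebra.norm ℚ) α ≠ 0 := by rw [Algebra.norm_ne_zero_iff]; exact hα
  have hnorm : Real.log |((Algebra.norm ℚ (algebraMap (𝓞 K) K β) : ℚ) : ℝ)|
      = Real.log |((Algebra.norm ℚ α : ℚ) : ℝ)|
        + Real.log |((Algebra.norm ℚ (algebraMap (𝓞 K) K γ) : ℚ) : ℝ)| := by
    have hb : (Algebra.norm ℚ) (algebraMap (𝓞 K) K β)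
        = (Algebra.norm ℚ) α * (Algebra.norm ℚ) (algebraMap (𝓞 K) K γ) := by
      rw [← _root_.map_mul]; congr 1; rw [← hαeq]; field_simp
    rw [hb]
    push_cast
    rw [abs_mul, Real.log_mul (by simpa using hNα) (by simpa using hNγ)]
  -- split the sum
  rw [← Finset.toLeft_disjSum_toRight (u := T), Finset.sum_disjSum]
  have hTL : T.toLeft = Finset.univ :=
    Finset.eq_univ_iff_forall.mpr fun w => Finset.mem_toLeft.mpr (hT w)
  have hinf : ∑ w ∈ T.toLeft, (placeLocalDeg K (Sum.inl w) : ℝ) *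
      Real.log (placeAbs K (Sum.inl w) α) = Real.log |((Algebra.norm ℚ α : ℚ) : ℝ)| := by
    rw [hTL]
    have habs : |((Algebra.norm ℚ α : ℚ) : ℝ)| = ∏ w : NumberField.InfinitePlace K,
        (w α) ^ (NumberField.InfinitePlace.mult w) := by
      rw [NumberField.InfinitePlace.prod_eq_abs_norm α]
      push_cast
      rfl
    rw [habs, Real.log_prod (fun w _ => pow_ne_zero _
      (NumberField.InfinitePlace.pos_iff.mpr hα).ne')]
    refine Finset.sum_congr rfl fun w _ => ?_
    rw [Real.log_pow]
    rfl
  have hfin : ∑ vf ∈ T.toRight, (placeLocalDeg K (Sum.inr vf) : ℝ) *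
      Real.log (placeAbs K (Sum.inr vf) α) = - Real.log |((Algebra.norm ℚ α : ℚ) : ℝ)| := by
    have step1 : ∀ vf ∈ T.toRight, (placeLocalDeg K (Sum.inr vf) : ℝ) *
        Real.log (placeAbs K (Sum.inr vf) α)
        = -((ordAt K vf α : ℝ) * Real.log (Ideal.absNorm vf.asIdeal)) := by
      intro vf _
      rw [show placeAbs K (Sum.inr vf) α = finAbs K vf α from rfl,
        show (placeLocalDeg K (Sum.inr vf) : ℝ) = (localDeg K vf : ℝ) from rfl,
        localDeg_mul_log_finAbs K vf hα]
      ring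
    rw [Finset.sum_congr rfl step1, Finset.sum_neg_distrib]
    congr 1
    have hsub : T.toRight ⊆ S := by
      intro v hv; rw [hS]; exact Finset.mem_union_left _ (Finset.mem_union_left _ hv)
    have hzero : ∀ v ∈ S, v ∉ T.toRight →
        (ordAt K v α : ℝ) * Real.log (Ideal.absNorm v.asIdeal) = 0 := by
      intro v _ hv
      have hvf : Sum.inr v ∉ T := fun hmem => hv (Finset.mem_toRight.mpr hmem)
      rw [ordAt_eq_zero_of_finAbs K v hα (h1 v hvf)]
      norm_num
    rw [Finset.sum_subset hsub hzero]
    have hsplit : ∀ v ∈ S, (ordAt K v α : ℝ) * Real.log (Ideal.absNorm v.asIdeal)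
        = (cnt K v (Ideal.span {β}) : ℝ) * Real.log (Ideal.absNorm v.asIdeal)
          - (cnt K v (Ideal.span {γ}) : ℝ) * Real.log (Ideal.absNorm v.asIdeal) := by
      intro v _; rw [hord v]; ring
    have hmemβ : ∀ v : HeightOneSpectrum (𝓞 K), v.asIdeal ∣ Ideal.span {β} → v ∈ S := by
      intro v hv
      rw [hS]
      exact Finset.mem_union_left _ (Finset.mem_union_right _
        ((Ideal.finite_factors hIβ).mem_toFinset.mpr hv))
    have hmemγ : ∀ v : HeightOneSpectrum (𝓞 K), v.asIdeal ∣ Ideal.span {γ} → v ∈ S := by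
      intro v hv
      rw [hS]
      exact Finset.mem_union_right _ ((Ideal.finite_factors hIγ).mem_toFinset.mpr hv)
    rw [Finset.sum_congr rfl hsplit, Finset.sum_sub_distrib,
      ← log_norm K β hβ0 S hmemβ, ← log_norm K γ hγ0 S hmemγ, hnorm]
    ring
  rw [hinf, hfin]
  ring

end SUnitDensity
namespace SUnitDensity

set_option maxHeartbeats 1000000
set_option synthInstance.maxHeartbeats 200000
set_option linter.unusedSectionVars false
open scoped nonZeroDivisors

lemma cnt_top (w : HeightOneSpectrum (𝓞 K)) : cnt K w (⊤ : Ideal (𝓞 K)) = 0 := by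
  rw [cnt, ← Ideal.one_eq_top, Associates.mk_one, Associates.factors_one,
    Associates.count_zero w.associates_irreducible]

lemma mk_ne_mk {v w : HeightOneSpectrum (𝓞 K)} (h : w ≠ v) :
    Associates.mk w.asIdeal ≠ Associates.mk v.asIdeal := by
  intro hc
  apply h
  exact HeightOneSpectrum.ext (associated_iff_eq.mp (Associates.mk_eq_mk_iff_associated.mp hc))

lemma exists_generator (v : HeightOneSpectrum (𝓞 K)) :
    ∃ β : 𝓞 K, β ≠ 0 ∧ cnt K v (Ideal.span {β}) ≠ 0 ∧
      ∀ w : HeightOneSpectrum (𝓞 K), w ≠ v → cnt K w (Ideal.span {β}) = 0 := by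
  have hv0 : v.asIdeal ∈ (Ideal (𝓞 K))⁰ := mem_nonZeroDivisors_iff_ne_zero.mpr v.ne_bot
  set n := Fintype.card (ClassGroup (𝓞 K)) with hn
  have hn0 : n ≠ 0 := Fintype.card_ne_zero
  have hvn : v.asIdeal ^ n ∈ (Ideal (𝓞 K))⁰ := pow_mem hv0 n
  have hone : ClassGroup.mk0 (⟨v.asIdeal ^ n, hvn⟩ : (Ideal (𝓞 K))⁰) = 1 := by
    have hpow : (ClassGroup.mk0 (⟨v.asIdeal, hv0⟩ : (Ideal (𝓞 K))⁰)) ^ n = 1 := pow_card_eq_one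
    rw [← hpow, ← map_pow]
    congr 1
  obtain ⟨β, hβ⟩ := (ClassGroup.mk0_eq_one_iff hvn).mp hone
  have hβ0 : β ≠ 0 := by
    intro h
    rw [h] at hβ
    have : v.asIdeal ^ n ≠ ⊥ := pow_ne_zero _ v.ne_bot
    apply this
    rw [hβ]
    simp
  refine ⟨β, hβ0, ?_, ?_⟩
  · rw [show Ideal.span {β} = v.asIdeal ^ n from hβ.symm, cnt, Associates.mk_pow,
      Associates.count_pow (Associates.mk_ne_zero.mpr v.ne_bot) v.associates_irreducible,
      Associates.count_self v.associates_irreducible, mul_one]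
    exact hn0
  · intro w hw
    rw [show Ideal.span {β} = v.asIdeal ^ n from hβ.symm, cnt, Associates.mk_pow,
      Associates.count_pow (Associates.mk_ne_zero.mpr v.ne_bot) w.associates_irreducible,
      Associates.count_eq_zero_of_ne w.associates_irreducible v.associates_irreducible
        (mk_ne_mk K hw), mul_zero]

lemma closure_span_rat {E : Type*} [AddCommGroup E] [Module ℝ E] [Module ℚ E]
    [IsScalarTower ℚ ℝ E] [TopologicalSpace E] [IsTopologicalAddGroup E] [ContinuousSMul ℝ E]
    [T2Space E] [FiniteDimensional ℝ E] (S : Set E) :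
    closure (↑(Submodule.span ℚ S) : Set E) = ↑(Submodule.span ℝ S) := by
  apply subset_antisymm
  · refine closure_minimal ?_ (Submodule.closed_of_finiteDimensional _)
    intro x hx
    have : Submodule.span ℚ S ≤ (Submodule.span ℝ S).restrictScalars ℚ :=
      Submodule.span_le.mpr Submodule.subset_span
    exact this hx
  · have hsmul : ∀ (c : ℝ) (x : E), x ∈ closure (↑(Submodule.span ℚ S) : Set E) →
        c • x ∈ closure (↑(Submodule.span ℚ S) : Set E) := by
      intro c x hx
      have hqs : ∀ q : ℚ, (q : ℝ) • x ∈ closure (↑(Submodule.span ℚ S) : Set E) := by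
        intro q
        have hmaps : Set.MapsTo (fun y : E => (q : ℝ) • y)
            (↑(Submodule.span ℚ S)) (↑(Submodule.span ℚ S)) := by
          intro y hy
          have hq : (q : ℝ) • y = q • y := by
            rw [← Rat.smul_one_eq_cast, smul_assoc, one_smul]
          show (q : ℝ) • y ∈ (↑(Submodule.span ℚ S) : Set E)
          rw [hq]
          exact Submodule.smul_mem _ q hy
        exact (hmaps.closure (continuous_const_smul ((q : ℝ)))) hx
      have hC : IsClosed {c : ℝ | c • x ∈ closure (↑(Submodule.span ℚ S) : Set E)} :=
        IsClosed.preimage (continuous_id.smul continuous_const) isClosed_closure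
      have hrange : Set.range ((↑) : ℚ → ℝ) ⊆
          {c : ℝ | c • x ∈ closure (↑(Submodule.span ℚ S) : Set E)} := by
        rintro _ ⟨q, rfl⟩
        exact hqs q
      exact closure_minimal hrange hC (Rat.denseRange_cast c)
    set N : Submodule ℝ E :=
      { carrier := closure (↑(Submodule.span ℚ S) : Set E)
        add_mem' := fun {a b} ha hb =>
          ((Submodule.span ℚ S).toAddSubmonoid.topologicalClosure).add_mem ha hb
        zero_mem' := subset_closure (Submodule.zero_mem _)
        smul_mem' := fun c x hx => hsmul c x hx } with hN
    intro x hx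
    have hSN : S ⊆ ↑N := fun s hs => subset_closure (Submodule.subset_span hs)
    exact (Submodule.span_le.mpr hSN) hx

end SUnitDensity
open SUnitDensity NumberField.Units NumberField.Units.dirichletUnitTheorem in
set_option maxHeartbeats 2000000 in
set_option synthInstance.maxHeartbeats 400000 in
/-- **Dirichlet's `S`-unit theorem, density form.** If `T` is a finite set of places of a
number field `K` containing all the archimedean places, then the `ℚ`-linear span of the image
of the `T`-unit group `U_{K,T} = {α ∈ K^× : ‖α‖_v = 1 ∀ v ∉ T}` under the logarithmic
embedding `α ↦ (([K_v:ℚ_v]/[K:ℚ]) · log ‖α‖_v)_{v ∈ T}` is dense in the hyperplane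
`{x ∈ ℝ^T : ∑_v x_v = 0}`. -/
theorem spanQ_logEmbedding_T_units_dense_in_hyperplane
    (K : Type*) [Field K] [NumberField K]
    (T : Finset (Place K)) (hT : ∀ w : InfinitePlace K, Sum.inl w ∈ T)
    (U : Set K) (hU : U = {α : K | α ≠ 0 ∧ ∀ v : Place K, v ∉ T → placeAbs K v α = 1})
    (l : K → (T → ℝ))
    (hl : ∀ α (v : T), l α v =
      ((placeLocalDeg K v.1 : ℝ) / (Module.finrank ℚ K : ℝ)) * Real.log (placeAbs K v.1 α)) :
    closure (↑(Submodule.span ℚ (l '' U)) : Set (T → ℝ)) = {x : T → ℝ | ∑ v, x v = 0} := by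
  classical
  subst hU
  set U : Set K := {α : K | α ≠ 0 ∧ ∀ v : Place K, v ∉ T → placeAbs K v α = 1} with hUdef
  set nK : ℝ := (Module.finrank ℚ K : ℝ) with hnKdef
  have hnK : nK ≠ 0 := by
    rw [hnKdef]
    exact_mod_cast Module.finrank_pos.ne'
  -- the sum of the coordinates of `l α` vanishes for `α ∈ U`
  have hsum0 : ∀ α ∈ U, ∑ v : {x // x ∈ T}, l α v = 0 := by
    intro α hα
    obtain ⟨hα0, hαP⟩ := hα
    have h1 : ∀ vf : HeightOneSpectrum (𝓞 K), Sum.inr vf ∉ T → finAbs K vf α = 1 :=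
      fun vf hvf => hαP (Sum.inr vf) hvf
    calc ∑ v : {x // x ∈ T}, l α v
        = ∑ v : {x // x ∈ T},
            nK⁻¹ * ((placeLocalDeg K v.1 : ℝ) * Real.log (placeAbs K v.1 α)) :=
          Finset.sum_congr rfl (fun v _ => by rw [hl α v]; ring)
      _ = nK⁻¹ * ∑ t ∈ T, ((placeLocalDeg K t : ℝ) * Real.log (placeAbs K t α)) := by
          rw [Finset.mul_sum,
            ← Finset.sum_coe_sort T
              (fun t => nK⁻¹ * ((placeLocalDeg K t : ℝ) * Real.log (placeAbs K t α)))]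
      _ = 0 := by rw [prod_formula K T hT hα0 h1, mul_zero]
  rw [closure_span_rat (l '' U)]
  -- the sum-of-coordinates linear form
  set σ : ({x // x ∈ T} → ℝ) →ₗ[ℝ] ℝ := ∑ v : {x // x ∈ T}, LinearMap.proj v with hσdef
  have hσ : ∀ x : {x // x ∈ T} → ℝ, σ x = ∑ v, x v := by
    intro x
    rw [hσdef]
    simp [LinearMap.proj_apply]
  have hle : Submodule.span ℝ (l '' U) ≤ LinearMap.ker σ := by
    rw [Submodule.span_le]
    rintro _ ⟨α, hαU, rfl⟩
    simp only [SetLike.mem_coe, LinearMap.mem_ker]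
    rw [hσ]
    exact hsum0 α hαU
  -- units give elements of U
  have hunit : ∀ u : (𝓞 K)ˣ, (algebraMap (𝓞 K) K (u : 𝓞 K)) ∈ U := by
    intro u
    have hu0 : algebraMap (𝓞 K) K (u : 𝓞 K) ≠ 0 :=
      (map_ne_zero_iff _ (IsFractionRing.injective (𝓞 K) K)).mpr (Units.ne_zero u)
    refine ⟨hu0, fun v hv => ?_⟩
    match v with
    | Sum.inl w => exact absurd (hT w) hv
    | Sum.inr vf =>
      show finAbs K vf _ = 1
      apply finAbs_eq_one K vf hu0
      rw [ordAt_algebraMap K vf _ (Units.ne_zero u),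
        show Ideal.span {(u : 𝓞 K)} = ⊤ from Ideal.span_singleton_eq_top.mpr u.isUnit,
        cnt_top, Nat.cast_zero]
  -- the linear map from the Dirichlet log-space into our coordinate space
  set Φ : ({w : InfinitePlace K // w ≠ w₀} → ℝ) →ₗ[ℝ] ({x // x ∈ T} → ℝ) :=
    LinearMap.pi (fun t : {x // x ∈ T} =>
      Sum.elim
        (fun w : InfinitePlace K =>
          if h : w = w₀ then
            (-nK⁻¹) • (∑ w' : {w : InfinitePlace K // w ≠ w₀}, LinearMap.proj w')
          else nK⁻¹ • LinearMap.proj (⟨w, h⟩ : {w : InfinitePlace K // w ≠ w₀}))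
        (fun _ : HeightOneSpectrum (𝓞 K) =>
          (0 : ({w : InfinitePlace K // w ≠ w₀} → ℝ) →ₗ[ℝ] ℝ))
        t.1) with hΦdef
  have hΦcoord : ∀ (z : {w : InfinitePlace K // w ≠ w₀} → ℝ) (t : {x // x ∈ T}),
      Φ z t = Sum.elim
        (fun w => if h : w = w₀ then -nK⁻¹ * ∑ w' : {w : InfinitePlace K // w ≠ w₀}, z w'
          else nK⁻¹ * z ⟨w, h⟩)
        (fun _ : HeightOneSpectrum (𝓞 K) => (0:ℝ)) t.1 := by
    intro z t
    rw [hΦdef]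
    simp only [LinearMap.pi_apply]
    rcases t with ⟨tv, htv⟩
    rcases tv with w | vf
    · simp only [Sum.elim_inl]
      by_cases h : w = w₀
      · rw [dif_pos h, dif_pos h]
        simp [LinearMap.proj_apply, neg_mul]
      · rw [dif_neg h, dif_neg h]
        simp [LinearMap.proj_apply]
    · simp
  -- Φ sends logEmbedding of units to l of units
  have hΦlog : ∀ u : (𝓞 K)ˣ,
      Φ (logEmbedding K (Additive.ofMul u)) = l (algebraMap (𝓞 K) K (u : 𝓞 K)) := by
    intro u
    have hu0 : algebraMap (𝓞 K) K (u : 𝓞 K) ≠ 0 :=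
      (map_ne_zero_iff _ (IsFractionRing.injective (𝓞 K) K)).mpr (Units.ne_zero u)
    funext t
    rw [hΦcoord, hl (algebraMap (𝓞 K) K (u : 𝓞 K)) t]
    rcases t with ⟨tv, htv⟩
    rcases tv with w | vf
    · simp only [Sum.elim_inl]
      have hplace : placeAbs K (Sum.inl w) (algebraMap (𝓞 K) K (u : 𝓞 K))
          = w ((u : 𝓞 K) : K) := rfl
      by_cases h : w = w₀
      · rw [dif_pos h]
        subst h
        rw [sum_logEmbedding_component u, hplace]
        have hmult : (placeLocalDeg K (Sum.inl (w₀ : InfinitePlace K)) : ℝ)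
            = (InfinitePlace.mult (w₀ : InfinitePlace K) : ℝ) := rfl
        rw [hmult]
        field_simp
        try ring
      · rw [dif_neg h, logEmbedding_component, hplace]
        show _ = (placeLocalDeg K (Sum.inl w) : ℝ) / nK * _
        have hmult : (placeLocalDeg K (Sum.inl w) : ℝ) = (InfinitePlace.mult w : ℝ) := rfl
        rw [hmult]
        field_simp
        try ring
    · simp only [Sum.elim_inr]
      have hplace : placeAbs K (Sum.inr vf) (algebraMap (𝓞 K) K (u : 𝓞 K))
          = finAbs K vf (algebraMap (𝓞 K) K (u : 𝓞 K)) := rfl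
      rw [hplace, finAbs_eq_one K vf hu0 (by
        rw [ordAt_algebraMap K vf _ (Units.ne_zero u),
          show Ideal.span {(u : 𝓞 K)} = ⊤ from Ideal.span_singleton_eq_top.mpr u.isUnit,
          cnt_top, Nat.cast_zero]), Real.log_one, mul_zero]
  have hΦmem : ∀ z, Φ z ∈ Submodule.span ℝ (l '' U) := by
    intro z
    have hz : z ∈ Submodule.span ℝ ((unitLattice K : Submodule ℤ _) : Set _) := by
      rw [unitLattice_span_eq_top]; trivial
    have hmap : Φ z ∈ Submodule.map Φ (Submodule.span ℝ ((unitLattice K : Submodule ℤ _) : Set _)) :=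
      Submodule.mem_map_of_mem hz
    rw [Submodule.map_span] at hmap
    refine Submodule.span_le.mpr ?_ hmap
    rintro _ ⟨w, hw, rfl⟩
    obtain ⟨y, -, rfl⟩ := Submodule.mem_map.mp hw
    rw [show (logEmbedding K).toIntLinearMap y = logEmbedding K (Additive.ofMul y.toMul) from rfl,
      hΦlog y.toMul]
    exact Submodule.subset_span ⟨_, hunit y.toMul, rfl⟩
  -- generators at the finite places
  have hgen := fun v : HeightOneSpectrum (𝓞 K) => exists_generator K v
  set αg : HeightOneSpectrum (𝓞 K) → K := fun v => algebraMap (𝓞 K) K (hgen v).choose with hαgdef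
  have hgβ0 : ∀ v, (hgen v).choose ≠ 0 := fun v => (hgen v).choose_spec.1
  have hgβv : ∀ v, cnt K v (Ideal.span {(hgen v).choose}) ≠ 0 := fun v => (hgen v).choose_spec.2.1
  have hgβw : ∀ v w, w ≠ v → cnt K w (Ideal.span {(hgen v).choose}) = 0 :=
    fun v => (hgen v).choose_spec.2.2
  have hαg0 : ∀ v, αg v ≠ 0 :=
    fun v => (map_ne_zero_iff _ (IsFractionRing.injective (𝓞 K) K)).mpr (hgβ0 v)
  have hαgU : ∀ v, Sum.inr v ∈ T → αg v ∈ U := by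
    intro v hv
    refine ⟨hαg0 v, fun w hw => ?_⟩
    match w with
    | Sum.inl w' => exact absurd (hT w') hw
    | Sum.inr w' =>
      show finAbs K w' (αg v) = 1
      apply finAbs_eq_one K w' (hαg0 v)
      rw [hαgdef]
      rw [ordAt_algebraMap K w' _ (hgβ0 v), hgβw v w' (fun hc => hw (hc ▸ hv)), Nat.cast_zero]
  have hαgcoord0 : ∀ (v w : HeightOneSpectrum (𝓞 K)) (hw : Sum.inr w ∈ T), w ≠ v →
      l (αg v) ⟨Sum.inr w, hw⟩ = 0 := by
    intro v w hw hwv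
    rw [hl]
    have hplace : placeAbs K (Sum.inr w) (αg v) = finAbs K w (αg v) := rfl
    rw [hplace, finAbs_eq_one K w (hαg0 v) (by
      rw [hαgdef, ordAt_algebraMap K w _ (hgβ0 v), hgβw v w hwv, Nat.cast_zero]),
      Real.log_one, mul_zero]
  have hcoordval : ∀ (v : HeightOneSpectrum (𝓞 K)) (hv : Sum.inr v ∈ T),
      l (αg v) ⟨Sum.inr v, hv⟩
        = nK⁻¹ * (-(ordAt K v (αg v) : ℝ) * Real.log (Ideal.absNorm v.asIdeal)) := by
    intro v hv
    rw [hl]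
    show (placeLocalDeg K (Sum.inr v) : ℝ) / nK * Real.log (placeAbs K (Sum.inr v) (αg v)) = _
    have hld : (placeLocalDeg K (Sum.inr v) : ℝ) = (localDeg K v : ℝ) := rfl
    have hplace : placeAbs K (Sum.inr v) (αg v) = finAbs K v (αg v) := rfl
    rw [hld, hplace]
    calc (localDeg K v : ℝ) / nK * Real.log (finAbs K v (αg v))
        = nK⁻¹ * ((localDeg K v : ℝ) * Real.log (finAbs K v (αg v))) := by ring
      _ = _ := by rw [localDeg_mul_log_finAbs K v (hαg0 v)]
  have hαgcoordv : ∀ (v : HeightOneSpectrum (𝓞 K)) (hv : Sum.inr v ∈ T),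
      l (αg v) ⟨Sum.inr v, hv⟩ ≠ 0 := by
    intro v hv
    rw [hcoordval v hv]
    refine mul_ne_zero (inv_ne_zero hnK) (mul_ne_zero ?_ ?_)
    · rw [neg_ne_zero, hαgdef, ordAt_algebraMap K v _ (hgβ0 v)]
      exact_mod_cast hgβv v
    · refine (Real.log_pos ?_).ne'
      exact_mod_cast one_lt_absNorm K v
  -- conclusion
  apply Set.Subset.antisymm
  · intro x hx
    have hker := hle hx
    rw [LinearMap.mem_ker, hσ x] at hker
    exact hker
  · intro x hx
    have hx0 : ∑ v, x v = 0 := hx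
    set cc : HeightOneSpectrum (𝓞 K) → ℝ := fun v =>
      if hv : Sum.inr v ∈ T then x ⟨Sum.inr v, hv⟩ / l (αg v) ⟨Sum.inr v, hv⟩ else 0 with hcc
    set y : {x // x ∈ T} → ℝ := ∑ v ∈ T.toRight, cc v • l (αg v) with hy
    have hyU : y ∈ Submodule.span ℝ (l '' U) := by
      rw [hy]
      exact Submodule.sum_mem _ (fun v hv => Submodule.smul_mem _ _
        (Submodule.subset_span ⟨αg v, hαgU v (Finset.mem_toRight.mp hv), rfl⟩))
    have hycoord : ∀ (w) (hw : Sum.inr w ∈ T), y ⟨Sum.inr w, hw⟩ = x ⟨Sum.inr w, hw⟩ := by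
      intro w hw
      rw [hy, Finset.sum_apply]
      rw [Finset.sum_eq_single w]
      · rw [Pi.smul_apply, hcc]
        simp only [dif_pos hw]
        rw [smul_eq_mul, div_mul_cancel₀ _ (hαgcoordv w hw)]
      · intro v hv hvw
        rw [Pi.smul_apply, hαgcoord0 v w hw (Ne.symm hvw), smul_zero]
      · intro hww
        exact absurd (Finset.mem_toRight.mpr hw) hww
    have hysum : σ y = 0 := by
      rw [hy, map_sum]
      refine Finset.sum_eq_zero fun v hv => ?_
      rw [map_smul, smul_eq_mul]
      have h0 : σ (l (αg v)) = 0 := by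
        rw [hσ]
        exact hsum0 _ (hαgU v (Finset.mem_toRight.mp hv))
      rw [h0, mul_zero]
    set t0 : {x // x ∈ T} → ℝ := x - y with ht0
    have ht0fin : ∀ (w) (hw : Sum.inr w ∈ T), t0 ⟨Sum.inr w, hw⟩ = 0 := by
      intro w hw
      rw [ht0, Pi.sub_apply, hycoord w hw, sub_self]
    have ht0sum : ∑ v, t0 v = 0 := by
      rw [ht0]
      simp only [Pi.sub_apply]
      rw [Finset.sum_sub_distrib, hx0]
      have : ∑ v, y v = 0 := by rw [← hσ]; exact hysum
      rw [this, sub_zero]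
    have hinfsum : ∑ w : InfinitePlace K, t0 ⟨Sum.inl w, hT w⟩ = 0 := by
      set X : Place K → ℝ := fun p => if h : p ∈ T then t0 ⟨p, h⟩ else 0 with hX
      have h1 : ∑ v, t0 v = ∑ p ∈ T, X p := by
        rw [← Finset.sum_coe_sort T X]
        refine Finset.sum_congr rfl fun v _ => ?_
        show t0 v = if h : ↑v ∈ T then t0 ⟨↑v, h⟩ else 0
        rw [dif_pos v.2]
      have h2 : ∑ p ∈ T, X p
          = ∑ w ∈ T.toLeft, X (Sum.inl w) + ∑ vf ∈ T.toRight, X (Sum.inr vf) := by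
        conv_lhs => rw [← Finset.toLeft_disjSum_toRight (u := T)]
        rw [Finset.sum_disjSum]
      have hTL : T.toLeft = Finset.univ :=
        Finset.eq_univ_iff_forall.mpr fun w => Finset.mem_toLeft.mpr (hT w)
      have h3 : ∑ vf ∈ T.toRight, X (Sum.inr vf) = 0 := by
        refine Finset.sum_eq_zero fun vf hvf => ?_
        have hmem : Sum.inr vf ∈ T := Finset.mem_toRight.mp hvf
        show (if h : Sum.inr vf ∈ T then t0 ⟨Sum.inr vf, h⟩ else 0) = 0
        rw [dif_pos hmem]
        exact ht0fin vf hmem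
      have h4 : ∀ w : InfinitePlace K, X (Sum.inl w) = t0 ⟨Sum.inl w, hT w⟩ := by
        intro w
        show (if h : Sum.inl w ∈ T then t0 ⟨Sum.inl w, h⟩ else 0) = _
        rw [dif_pos (hT w)]
      calc ∑ w : InfinitePlace K, t0 ⟨Sum.inl w, hT w⟩
          = ∑ w ∈ T.toLeft, X (Sum.inl w) := by
            rw [hTL]
            exact (Finset.sum_congr rfl fun w _ => (h4 w)).symm
        _ = ∑ p ∈ T, X p - ∑ vf ∈ T.toRight, X (Sum.inr vf) := by rw [h2]; ring
        _ = 0 := by rw [h3, ← h1, ht0sum, sub_zero]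
    set z : {w : InfinitePlace K // w ≠ w₀} → ℝ :=
      fun w => nK * t0 ⟨Sum.inl w.1, hT w.1⟩ with hz
    have ht0Φ : t0 = Φ z := by
      funext t
      rw [hΦcoord]
      rcases t with ⟨tv, htv⟩
      rcases tv with w | vf
      · simp only [Sum.elim_inl]
        by_cases h : w = w₀
        · rw [dif_pos h]
          subst h
          have hsz : ∑ w' : {w : InfinitePlace K // w ≠ w₀}, z w'
              = nK * (∑ w' : {w : InfinitePlace K // w ≠ w₀}, t0 ⟨Sum.inl w'.1, hT w'.1⟩) := by
            rw [Finset.mul_sum]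
          have hsplit : t0 ⟨Sum.inl w₀, hT w₀⟩
              + ∑ w' : {w : InfinitePlace K // w ≠ w₀}, t0 ⟨Sum.inl w'.1, hT w'.1⟩ = 0 := by
            have hiff : ∀ w' : InfinitePlace K, w' ∈ Finset.univ.erase w₀ ↔ w' ≠ w₀ := by
              intro w'; simp
            have hsb : ∑ w' : {w : InfinitePlace K // w ≠ w₀}, t0 ⟨Sum.inl w'.1, hT w'.1⟩
                = ∑ w' ∈ Finset.univ.erase w₀, t0 ⟨Sum.inl w', hT w'⟩ :=
              (Finset.sum_subtype (Finset.univ.erase w₀) hiff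
                (fun w => t0 ⟨Sum.inl w, hT w⟩)).symm
            rw [hsb, ← hinfsum]
            exact Finset.add_sum_erase _ (fun w => t0 ⟨Sum.inl w, hT w⟩) (Finset.mem_univ w₀)
          rw [hsz]
          have heq : t0 ⟨Sum.inl w₀, htv⟩ = t0 ⟨Sum.inl w₀, hT w₀⟩ := rfl
          rw [heq]
          have hrw : -nK⁻¹ * (nK * ∑ w' : {w : InfinitePlace K // w ≠ w₀},
              t0 ⟨Sum.inl w'.1, hT w'.1⟩)
              = -(∑ w' : {w : InfinitePlace K // w ≠ w₀}, t0 ⟨Sum.inl w'.1, hT w'.1⟩) := by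
            field_simp
          rw [hrw]
          linarith [hsplit]
        · rw [dif_neg h, hz]
          show t0 ⟨Sum.inl w, htv⟩ = nK⁻¹ * (nK * t0 ⟨Sum.inl w, hT w⟩)
          have heq : t0 ⟨Sum.inl w, htv⟩ = t0 ⟨Sum.inl w, hT w⟩ := rfl
          rw [heq]
          field_simp
      · simp only [Sum.elim_inr]
        exact ht0fin vf htv
    have hxsplit : x = t0 + y := by
      rw [ht0]
      abel
    rw [hxsplit]
    exact Submodule.add_mem _ (ht0Φ ▸ hΦmem z) hyU
end

section
/- Let (I, ≤) be a directed partially ordered set and let (X_i)_{i ∈ I} be an inverse system of nonempty discrete topological spaces indexed by I, whose transition maps π_{ij} : X_j → X_i (for i ≤ j) are surjective with finite fibers (each point of X_i has finitely many preimages in X_j). Let Y = lim←_i X_i be the inverse limit with its limit topology and let π_i : Y → X_i be the canonical projections. Then a subset S ⊆ Y is compact and open if and only if there exist an index i ∈ I and a finite subset F ⊆ X_i such that S = π_i^{-1}(F). -/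
def InverseLimit {I : Type*} [PartialOrder I] (X : I → Type*)
    (π : ∀ i j, i ≤ j → X j → X i) : Type _ :=
  {f : ∀ i, X i // ∀ (i j : I) (h : i ≤ j), π i j h (f j) = f i}

instance InverseLimit.instTopologicalSpace {I : Type*} [PartialOrder I] (X : I → Type*)
    [∀ i, TopologicalSpace (X i)] (π : ∀ i j, i ≤ j → X j → X i) :
    TopologicalSpace (InverseLimit X π) :=
  inferInstanceAs (TopologicalSpace {f : ∀ i, X i // ∀ (i j : I) (h : i ≤ j), π i j h (f j) = f i})

def InverseLimit.proj {I : Type*} [PartialOrder I] {X : I → Type*}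
    {π : ∀ i j, i ≤ j → X j → X i} (i : I) (f : InverseLimit X π) : X i :=
  f.1 i

lemma InverseLimit.continuous_proj {I : Type*} [PartialOrder I] {X : I → Type*}
    [∀ i, TopologicalSpace (X i)] {π : ∀ i j, i ≤ j → X j → X i} (i : I) :
    Continuous (InverseLimit.proj (X := X) (π := π) i) :=
  (continuous_apply i).comp continuous_subtype_val

/-- In the inverse limit `Y = lim← X i` of nonempty discrete spaces over a directed poset,
with surjective transition maps having finite fibers, a subset `S ⊆ Y` is compact and open
if and only if `S = π_i⁻¹(F)` for some index `i` and some finite subset `F ⊆ X i`. -/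
theorem isCompact_isOpen_iff_preimage_finite_of_inverseLimit
    {I : Type*} [PartialOrder I] [Nonempty I] [IsDirected I (· ≤ ·)]
    (X : I → Type*) [∀ i, TopologicalSpace (X i)] [∀ i, DiscreteTopology (X i)]
    [∀ i, Nonempty (X i)]
    (π : ∀ i j, i ≤ j → X j → X i)
    (hrefl : ∀ (i : I) (x : X i), π i i le_rfl x = x)
    (hcomp : ∀ (i j k : I) (hij : i ≤ j) (hjk : j ≤ k) (x : X k),
      π i j hij (π j k hjk x) = π i k (hij.trans hjk) x)
    (hsurj : ∀ (i j : I) (h : i ≤ j), Function.Surjective (π i j h))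
    (hfib : ∀ (i j : I) (h : i ≤ j) (x : X i), {y : X j | π i j h y = x}.Finite)
    (S : Set (InverseLimit X π)) :
    (IsCompact S ∧ IsOpen S) ↔
      ∃ (i : I) (F : Set (X i)), F.Finite ∧ S = InverseLimit.proj i ⁻¹' F := by
  classical
  constructor
  · rintro ⟨hScomp, hSopen⟩
    -- every point of S has a basic neighborhood inside S
    have key : ∀ f ∈ S, ∃ k : I,
        (InverseLimit.proj k ⁻¹' {f.1 k} : Set (InverseLimit X π)) ⊆ S := by
      intro f hf
      have h1 : S ∈ nhds f := hSopen.mem_nhds hf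
      erw [nhds_subtype] at h1
      obtain ⟨U, hU, hUS⟩ := h1
      obtain ⟨V, hVU, hVopen, hfV⟩ := mem_nhds_iff.mp hU
      obtain ⟨J, W, hW, hsub⟩ := isOpen_pi_iff.mp hVopen _ hfV
      obtain ⟨k, hk⟩ := J.exists_le
      refine ⟨k, fun g hg => ?_⟩
      have hg' : g.1 k = f.1 k := hg
      apply hUS
      apply hVU
      apply hsub
      intro j hj
      have : g.1 j = f.1 j := by
        rw [← g.2 j k (hk j hj), ← f.2 j k (hk j hj), hg']
      rw [this]
      exact (hW j hj).2
    choose k hk using key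
    -- finite subcover
    have hcov : S ⊆ ⋃ f : S, (InverseLimit.proj (k f f.2) ⁻¹' {f.1.1 (k f f.2)}) := by
      intro g hg
      exact Set.mem_iUnion.mpr ⟨⟨g, hg⟩, rfl⟩
    obtain ⟨t, ht⟩ := hScomp.elim_finite_subcover
      (fun f : S => (InverseLimit.proj (k f f.2) ⁻¹' {f.1.1 (k f f.2)}))
      (fun f => (isOpen_discrete _).preimage (InverseLimit.continuous_proj _)) hcov
    obtain ⟨i, hi⟩ := (t.image (fun f : S => k f f.2)).exists_le
    have hi' : ∀ f ∈ t, k f f.2 ≤ i := fun f hf =>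
      hi _ (Finset.mem_image_of_mem _ hf)
    refine ⟨i, ⋃ f ∈ t,
        {x : X i | ∀ h : k f.1 f.2 ≤ i, π (k f.1 f.2) i h x = f.1.1 (k f.1 f.2)}, ?_, ?_⟩
    · refine Set.Finite.biUnion t.finite_toSet fun f hf => ?_
      refine (hfib (k f.1 f.2) i (hi' f hf) (f.1.1 (k f.1 f.2))).subset ?_
      intro x hx
      exact hx (hi' f hf)
    · ext g
      simp only [Set.mem_preimage, Set.mem_iUnion, Set.mem_setOf_eq]
      constructor
      · intro hg
        obtain ⟨f, hft, hgf⟩ := Set.mem_iUnion₂.mp (ht hg)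
        refine ⟨f, hft, fun h => ?_⟩
        have hgf' : g.1 (k f.1 f.2) = f.1.1 (k f.1 f.2) := hgf
        rw [show (InverseLimit.proj i g : X i) = g.1 i from rfl,
          g.2 (k f.1 f.2) i h, hgf']
      · rintro ⟨f, hft, hgf⟩
        have hgf' := hgf (hi' f hft)
        apply hk f f.2
        show g.1 (k f.1 f.2) = f.1.1 (k f.1 f.2)
        rw [← g.2 (k f.1 f.2) i (hi' f hft)]
        exact hgf'
  · rintro ⟨i, F, hF, rfl⟩
    have hopen : IsOpen (InverseLimit.proj (π := π) i ⁻¹' F) :=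
      (isOpen_discrete F).preimage (InverseLimit.continuous_proj i)
    refine ⟨?_, hopen⟩
    -- compactness: work in the product
    erw [Topology.IsEmbedding.subtypeVal.isCompact_iff]
    -- choose, for each j, an upper bound of i and j
    have hdir : ∀ j : I, ∃ m, i ≤ m ∧ j ≤ m := fun j => directed_of (· ≤ ·) i j
    choose m hm1 hm2 using hdir
    set T : ∀ j, Set (X j) := fun j => π j (m j) (hm2 j) '' ((π i (m j) (hm1 j)) ⁻¹' F) with hT
    have hTfin : ∀ j, (T j).Finite := by
      intro j
      apply Set.Finite.image
      have : (π i (m j) (hm1 j)) ⁻¹' F = ⋃ x ∈ F, {y | π i (m j) (hm1 j) y = x} := by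
        ext y; simp [Set.mem_preimage]
      rw [this]
      exact Set.Finite.biUnion hF fun x _ => hfib _ _ _ _
    have hsubset : Subtype.val '' (InverseLimit.proj (π := π) i ⁻¹' F) ⊆ Set.pi Set.univ T := by
      rintro _ ⟨g, hg, rfl⟩ j _
      refine ⟨g.1 (m j), ?_, g.2 j (m j) (hm2 j)⟩
      show π i (m j) (hm1 j) (g.1 (m j)) ∈ F
      rw [g.2 i (m j) (hm1 j)]
      exact hg
    have hclosed : IsClosed (Subtype.val '' (InverseLimit.proj (π := π) i ⁻¹' F)) := by
      have : Subtype.val '' (InverseLimit.proj (π := π) i ⁻¹' F) =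
          {f : ∀ j, X j | ∀ (a b : I) (h : a ≤ b), π a b h (f b) = f a} ∩ (fun f => f i) ⁻¹' F := by
        ext f
        constructor
        · rintro ⟨g, hg, rfl⟩
          exact ⟨g.2, hg⟩
        · rintro ⟨hcompat, hf⟩
          exact ⟨⟨f, hcompat⟩, hf, rfl⟩
      rw [this]
      apply IsClosed.inter
      · have : {f : ∀ j, X j | ∀ (a b : I) (h : a ≤ b), π a b h (f b) = f a} =
            ⋂ (a : I), ⋂ (b : I), ⋂ (h : a ≤ b), {f : ∀ j, X j | π a b h (f b) = f a} := by
          ext f; simp [Set.mem_iInter]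
        rw [this]
        refine isClosed_iInter fun a => isClosed_iInter fun b => isClosed_iInter fun h => ?_
        exact isClosed_eq ((continuous_of_discreteTopology).comp (continuous_apply b)) (continuous_apply a)
      · exact (hF.isClosed).preimage (continuous_apply i)
    exact ((isCompact_univ_pi fun j => (hTfin j).isCompact).of_isClosed_subset hclosed hsubset)
end
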